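/- Let n ≥ 4 be even, let 0 < a_1 ≤ a_2 ≤ … ≤ a_n, and let A_1,…,A_{n/2−1} ≥ 0 with at least one A_k ≠ 0. Define the polynomial Q(x) = (x+a_1)(x+a_2)⋯(x+a_n) + Σ_{k=1}^{n/2−1} A_k x^{2k}. Then Q has at most two real roots in the open interval (−a_n, −a_{n−1}) and at most two real roots in the open interval (−a_2, −a_1). -/

import Mathlib

lemma strictConcaveOn_zeros {lo hi : ℝ} {f : ℝ → ℝ}
    (hf : StrictConcaveOn ℝ (Set.Ioo lo hi) f) :
    Set.encard {x ∈ Set.Ioo lo hi | f x = 0} ≤ 2 := by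
  set s := {x ∈ Set.Ioo lo hi | f x = 0} with hs
  have key : ∀ p q r : ℝ, p ∈ s → q ∈ s → r ∈ s → p < q → q < r → False := by
    intro p q r hp hq hr hpq hqr
    obtain ⟨hpI, hfp⟩ := hp
    obtain ⟨hqI, hfq⟩ := hq
    obtain ⟨hrI, hfr⟩ := hr
    have hpr : p < r := hpq.trans hqr
    set t : ℝ := (r - q) / (r - p) with ht
    have h1 : (0:ℝ) < r - p := by linarith
    have htpos : 0 < t := div_pos (by linarith) h1
    have ht1 : 0 < 1 - t := by
      rw [ht]; rw [sub_pos, div_lt_one h1]; linarith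
    have hcomb : t • p + (1 - t) • r = q := by
      have hne : r - p ≠ 0 := ne_of_gt h1
      rw [smul_eq_mul, smul_eq_mul, ht]
      field_simp
      ring
    have hlt := hf.2 hpI hrI (ne_of_lt hpr) htpos ht1 (by ring)
    rw [hcomb, hfq] at hlt
    rw [hfp, hfr] at hlt
    simp only [smul_eq_mul, mul_zero, add_zero] at hlt
    exact absurd hlt (lt_irrefl 0)
  by_contra hcon
  push_neg at hcon
  have h3 : (3:ℕ∞) ≤ s.encard := by
    exact Order.add_one_le_of_lt hcon
  obtain ⟨u, hu, huc⟩ := Set.exists_subset_encard_eq h3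
  rw [Set.encard_eq_three] at huc
  obtain ⟨x, y, z, hxy, hxz, hyz, rfl⟩ := huc
  have hx : x ∈ s := hu (by left; rfl)
  have hy : y ∈ s := hu (by right; left; rfl)
  have hz : z ∈ s := hu (by right; right; rfl)
  rcases lt_trichotomy x y with h1 | h1 | h1
  · rcases lt_trichotomy y z with h2 | h2 | h2
    · exact key x y z hx hy hz h1 h2
    · exact hyz h2
    · rcases lt_trichotomy x z with h3 | h3 | h3
      · exact key x z y hx hz hy h3 h2
      · exact hxz h3
      · exact key z x y hz hx hy h3 h1
  · exact hxy h1
  · rcases lt_trichotomy x z with h2 | h2 | h2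
    · exact key y x z hy hx hz h1 h2
    · exact hxz h2
    · rcases lt_trichotomy y z with h3 | h3 | h3
      · exact key y z x hy hz hx h3 h2
      · exact hyz h3
      · exact key z y x hz hy hx h3 h1


set_option maxHeartbeats 2000000 in

lemma interval_top (n : ℕ) (hn : 4 ≤ n) (heven : Even n)
    (b : Fin n → ℝ) (hpos : ∀ i, 0 < b i) (hmono : Monotone b)
    (A : ℕ → ℝ) (hA : ∀ k ∈ Finset.Icc 1 (n / 2 - 1), 0 ≤ A k)
    (hA' : ∃ k ∈ Finset.Icc 1 (n / 2 - 1), A k ≠ 0) :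
    Set.encard {x ∈ Set.Ioo (-(b ⟨n - 1, (by omega : n - 1 + 0 < n)⟩))
      (-(b ⟨n - 2, (by omega : n - 2 + 0 < n)⟩)) |
      (∏ i, (x + b i)) + ∑ k ∈ Finset.Icc 1 (n / 2 - 1), A k * x ^ (2 * k) = 0}
      ≤ 2 := by
  have hn2 : 2 ≤ n / 2 := by omega
  obtain ⟨m, hm⟩ := heven
  have hm' : n = 2 * m := by omega
  have hnd : n / 2 = m := by omega
  set iN : Fin n := ⟨n - 1, by omega⟩ with hiN
  set iM : Fin n := ⟨n - 2, by omega⟩ with hiM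
  set KS : Finset ℕ := Finset.Icc 1 (n / 2 - 1) with hKS
  set lo : ℝ := -(b iN) with hlo
  set hi : ℝ := -(b iM) with hhi
  set E : Finset (Fin n) := Finset.univ.erase iN with hE
  set S : ℝ → ℝ := fun x => ∑ k ∈ KS, A k * x ^ (2 * k) with hS
  set S1 : ℝ → ℝ := fun x => ∑ k ∈ KS, (A k * (2 * k : ℕ)) * x ^ (2 * k - 1) with hS1
  set S2 : ℝ → ℝ := fun x => ∑ k ∈ KS, (A k * (2 * k : ℕ) * (2 * k - 1 : ℕ)) * x ^ (2 * k - 2)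
    with hS2
  set G : ℝ → ℝ := fun x =>
    Real.log (x + b iN) + (∑ i ∈ E, Real.log (-(x + b i))) - Real.log (S x) with hG
  set G1 : ℝ → ℝ := fun x =>
    1 / (x + b iN) + (∑ i ∈ E, 1 / (x + b i)) - S1 x / S x with hG1
  set G2 : ℝ → ℝ := fun x =>
    -(1 / (x + b iN) ^ 2) - (∑ i ∈ E, 1 / (x + b i) ^ 2)
      - (S2 x * S x - S1 x * S1 x) / (S x) ^ 2 with hG2
  -- basic facts on the interval
  have hbM : 0 < b iM := hpos iM
  have hIsub : ∀ x ∈ Set.Ioo lo hi, x < 0 := fun x hx => lt_of_lt_of_le hx.2 (by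
    rw [hhi]; linarith)
  have hxN : ∀ x ∈ Set.Ioo lo hi, 0 < x + b iN := fun x hx => by
    have := hx.1; rw [hlo] at this; linarith
  have hbE : ∀ i ∈ E, b i ≤ b iM := by
    intro i hi'
    apply hmono
    have h1 := Finset.ne_of_mem_erase hi'
    have h2 : i.1 < n := i.2
    have : i.1 ≠ n - 1 := fun h => h1 (Fin.ext h)
    show i.1 ≤ n - 2
    omega
  have hxE : ∀ x ∈ Set.Ioo lo hi, ∀ i ∈ E, x + b i < 0 := by
    intro x hx i hi'
    have h1 := hbE i hi'
    have h2 := hx.2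
    rw [hhi] at h2
    linarith
  have hSpos : ∀ x : ℝ, x ≠ 0 → 0 < S x := by
    intro x hx
    apply Finset.sum_pos'
    · intro k hk
      have h0 := hA k hk
      have hx2 : (0:ℝ) ≤ x ^ (2 * k) := by rw [pow_mul]; exact pow_nonneg (sq_nonneg x) k
      exact mul_nonneg h0 hx2
    · obtain ⟨k, hk, hAk⟩ := hA'
      refine ⟨k, hk, ?_⟩
      have h1 : 0 < A k := lt_of_le_of_ne (hA k hk) (Ne.symm hAk)
      have h2 : (0:ℝ) < x ^ (2 * k) := by
        rw [pow_mul]; exact pow_pos (pow_two_pos_of_ne_zero hx) k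
      exact mul_pos h1 h2
  -- derivatives
  have hSd : ∀ x : ℝ, HasDerivAt S (S1 x) x := by
    intro x
    have h := HasDerivAt.fun_sum (fun k (hk : k ∈ KS) =>
      ((hasDerivAt_pow (2 * k) x).const_mul (A k)))
    refine h.congr_deriv ?_
    exact Finset.sum_congr rfl fun k hk => by push_cast; ring
  have hS1d : ∀ x : ℝ, HasDerivAt S1 (S2 x) x := by
    intro x
    have h := HasDerivAt.fun_sum (fun k (hk : k ∈ KS) =>
      ((hasDerivAt_pow (2 * k - 1) x).const_mul (A k * (2 * k : ℕ))))
    refine h.congr_deriv ?_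
    refine Finset.sum_congr rfl fun k hk => ?_
    have hk1 : 1 ≤ k := (Finset.mem_Icc.mp hk).1
    have h2 : 2 * k - 1 - 1 = 2 * k - 2 := by omega
    rw [h2]
    ring
  have hGd : ∀ x ∈ Set.Ioo lo hi, HasDerivAt G (G1 x) x := by
    intro x hx
    have hx0 := hIsub x hx
    have hN := hxN x hx
    have hdN : HasDerivAt (fun y : ℝ => Real.log (y + b iN)) (1 / (x + b iN)) x := by
      have := (((hasDerivAt_id x).add_const (b iN)).log (ne_of_gt hN))
      simpa using this
    have hdE : ∀ i ∈ E, HasDerivAt (fun y : ℝ => Real.log (-(y + b i))) (1 / (x + b i)) x := by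
      intro i hi'
      have hne : -(x + b i) ≠ 0 := by
        have := hxE x hx i hi'; intro h; rw [neg_eq_zero] at h; linarith
      have := (((hasDerivAt_id x).add_const (b i)).fun_neg.log hne)
      refine this.congr_deriv ?_
      rw [neg_div_neg_eq]
      simp
    have hdS : HasDerivAt (fun y : ℝ => Real.log (S y)) (S1 x / S x) x :=
      (hSd x).log (ne_of_gt (hSpos x (ne_of_lt hx0)))
    exact ((hdN.fun_add (HasDerivAt.fun_sum hdE)).fun_sub hdS)
  have hG1d : ∀ x ∈ Set.Ioo lo hi, HasDerivAt G1 (G2 x) x := by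
    intro x hx
    have hx0 := hIsub x hx
    have hN := hxN x hx
    have hSx := hSpos x (ne_of_lt hx0)
    have hdN : HasDerivAt (fun y : ℝ => 1 / (y + b iN)) (-(1 / (x + b iN) ^ 2)) x := by
      have := ((hasDerivAt_const x (1:ℝ)).fun_div ((hasDerivAt_id x).add_const (b iN))
        (ne_of_gt hN))
      refine this.congr_deriv ?_
      simp only [id_eq]
      field_simp
      ring
    have hdE : ∀ i ∈ E, HasDerivAt (fun y : ℝ => 1 / (y + b i)) (-(1 / (x + b i) ^ 2)) x := by
      intro i hi'
      have hne : x + b i ≠ 0 := ne_of_lt (hxE x hx i hi')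
      have := ((hasDerivAt_const x (1:ℝ)).fun_div ((hasDerivAt_id x).add_const (b i)) hne)
      refine this.congr_deriv ?_
      simp only [id_eq]
      field_simp
      ring
    have hdS : HasDerivAt (fun y : ℝ => S1 y / S y)
        ((S2 x * S x - S1 x * S1 x) / (S x) ^ 2) x :=
      (hS1d x).div (hSd x) (ne_of_gt hSx)
    have h := (hdN.fun_add (HasDerivAt.fun_sum hdE)).fun_sub hdS
    refine h.congr_deriv ?_
    rw [hG2]
    rw [Finset.sum_neg_distrib]
    ring
  -- second derivative is negative on the interval
  have hG2neg : ∀ x ∈ Set.Ioo lo hi, G2 x < 0 := by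
    intro x hx
    have hx0 := hIsub x hx
    have hx2 : (0:ℝ) < x ^ 2 := pow_two_pos_of_ne_zero (ne_of_lt hx0)
    have hN := hxN x hx
    have hSx := hSpos x (ne_of_lt hx0)
    set u : ℕ → ℝ := fun k => A k * x ^ (2 * k) with hu
    have hunn : ∀ k ∈ KS, 0 ≤ u k := fun k hk =>
      mul_nonneg (hA k hk) (by rw [pow_mul]; exact pow_nonneg (sq_nonneg x) k)
    set m0 : ℝ := ∑ k ∈ KS, u k with hm0
    set m1 : ℝ := ∑ k ∈ KS, ((2 * k : ℕ) : ℝ) * u k with hm1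
    set m2 : ℝ := ∑ k ∈ KS, ((2 * k : ℕ) : ℝ) ^ 2 * u k with hm2
    have hSxm : S x = m0 := rfl
    have he1 : x * S1 x = m1 := by
      rw [hS1, hm1, Finset.mul_sum]
      refine Finset.sum_congr rfl fun k hk => ?_
      have hk1 : 1 ≤ k := (Finset.mem_Icc.mp hk).1
      have hp : x ^ (2 * k - 1) * x = x ^ (2 * k) := by
        rw [← pow_succ]; congr 1; omega
      calc x * ((A k * ((2 * k : ℕ) : ℝ)) * x ^ (2 * k - 1))
          = ((2 * k : ℕ) : ℝ) * (A k * (x ^ (2 * k - 1) * x)) := by ring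
        _ = ((2 * k : ℕ) : ℝ) * (A k * x ^ (2 * k)) := by rw [hp]
        _ = ((2 * k : ℕ) : ℝ) * u k := rfl
    have he2 : x ^ 2 * S2 x = m2 - m1 := by
      rw [hS2, hm2, hm1, ← Finset.sum_sub_distrib, Finset.mul_sum]
      refine Finset.sum_congr rfl fun k hk => ?_
      have hk1 : 1 ≤ k := (Finset.mem_Icc.mp hk).1
      have hp : x ^ (2 * k - 2) * x ^ 2 = x ^ (2 * k) := by
        rw [← pow_add]; congr 1; omega
      have hc : ((2 * k - 1 : ℕ) : ℝ) = ((2 * k : ℕ) : ℝ) - 1 := by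
        rw [Nat.cast_sub (by omega : 1 ≤ 2 * k)]; norm_num
      calc x ^ 2 * ((A k * ((2 * k : ℕ) : ℝ) * ((2 * k - 1 : ℕ) : ℝ)) * x ^ (2 * k - 2))
          = (A k * ((2 * k : ℕ) : ℝ) * ((2 * k - 1 : ℕ) : ℝ)) * (x ^ (2 * k - 2) * x ^ 2) := by
            ring
        _ = (A k * ((2 * k : ℕ) : ℝ) * (((2 * k : ℕ) : ℝ) - 1)) * x ^ (2 * k) := by rw [hp, hc]
        _ = ((2 * k : ℕ) : ℝ) ^ 2 * u k - ((2 * k : ℕ) : ℝ) * u k := by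
            simp only [hu]; ring
    have hcs : m1 ^ 2 ≤ m0 * m2 :=
      Finset.sum_sq_le_sum_mul_sum_of_sq_eq_mul KS hunn
        (fun k hk => mul_nonneg (sq_nonneg _) (hunn k hk))
        (fun k hk => by ring)
    have hm1le : m1 ≤ ((n : ℝ) - 2) * m0 := by
      rw [hm1, hm0, Finset.mul_sum]
      refine Finset.sum_le_sum fun k hk => ?_
      have hk2 := (Finset.mem_Icc.mp hk).2
      have h2k : (2 * k : ℕ) ≤ n - 2 := by omega
      have hcast : ((2 * k : ℕ) : ℝ) ≤ (n : ℝ) - 2 := by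
        have h3 := (Nat.cast_le (α := ℝ)).mpr h2k
        rw [Nat.cast_sub (by omega : 2 ≤ n)] at h3
        push_cast at h3 ⊢
        linarith
      exact mul_le_mul_of_nonneg_right hcast (hunn k hk)
    have hm0nn : 0 ≤ m0 := Finset.sum_nonneg hunn
    have hkey : -(((n : ℝ) - 2) * m0 ^ 2) ≤ (m2 - m1) * m0 - m1 ^ 2 := by
      nlinarith [hcs, mul_le_mul_of_nonneg_right hm1le hm0nn]
    have hS2x : (0:ℝ) < S x ^ 2 := by positivity
    have hC : -(((n : ℝ) - 2) * (1 / x ^ 2)) ≤ (S2 x * S x - S1 x * S1 x) / S x ^ 2 := by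
      have h1 : (-((n : ℝ) - 2)) / x ^ 2 ≤ (S2 x * S x - S1 x * S1 x) / S x ^ 2 := by
        rw [div_le_div_iff₀ hx2 hS2x]
        have e : (S2 x * S x - S1 x * S1 x) * x ^ 2 = (m2 - m1) * m0 - m1 ^ 2 := by
          have : (S2 x * S x - S1 x * S1 x) * x ^ 2
              = (x ^ 2 * S2 x) * S x - (x * S1 x) ^ 2 := by ring
          rw [this, he2, he1, hSxm]
        rw [e]
        have e2 : -((n : ℝ) - 2) * S x ^ 2 = -(((n : ℝ) - 2) * m0 ^ 2) := by
          rw [hSxm]; ring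
        rw [e2]
        exact hkey
      have e3 : -(((n : ℝ) - 2) * (1 / x ^ 2)) = (-((n : ℝ) - 2)) / x ^ 2 := by ring
      rw [e3]
      exact h1
    have hB : ((n : ℝ) - 1) * (1 / x ^ 2) ≤ ∑ i ∈ E, 1 / (x + b i) ^ 2 := by
      have hcard : (E.card : ℝ) = (n : ℝ) - 1 := by
        rw [hE, Finset.card_erase_of_mem (Finset.mem_univ iN), Finset.card_univ,
          Fintype.card_fin, Nat.cast_sub (by omega : 1 ≤ n)]
        norm_num
      have h1 : ∀ i ∈ E, 1 / x ^ 2 ≤ 1 / (x + b i) ^ 2 := by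
        intro i hi'
        have h2 := hxE x hx i hi'
        have h3 : 0 < b i := hpos i
        have h4 : (x + b i) ^ 2 < x ^ 2 := by nlinarith
        have h5 : (0:ℝ) < (x + b i) ^ 2 := pow_two_pos_of_ne_zero (ne_of_lt h2)
        exact one_div_le_one_div_of_le h5 (le_of_lt h4)
      calc ((n : ℝ) - 1) * (1 / x ^ 2) = ∑ _i ∈ E, (1 / x ^ 2) := by
            rw [Finset.sum_const, nsmul_eq_mul, hcard]
        _ ≤ _ := Finset.sum_le_sum h1
    have hA2 : 0 < 1 / (x + b iN) ^ 2 := by positivity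
    have hxx : 0 < 1 / x ^ 2 := by positivity
    have hfin : ((n : ℝ) - 1) * (1 / x ^ 2) - ((n : ℝ) - 2) * (1 / x ^ 2) = 1 / x ^ 2 := by ring
    rw [hG2]
    simp only []
    linarith [hB, hC, hA2]
  -- strict concavity
  have hconc : StrictConcaveOn ℝ (Set.Ioo lo hi) G := by
    apply strictConcaveOn_of_deriv2_neg (convex_Ioo lo hi)
      (fun x hx => (hGd x hx).continuousAt.continuousWithinAt)
    intro x hx
    rw [interior_Ioo] at hx
    have hd1 : deriv G =ᶠ[nhds x] G1 := by
      filter_upwards [isOpen_Ioo.mem_nhds hx] with y hy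
      exact (hGd y hy).deriv
    have h2 : deriv^[2] G x = deriv G1 x := by
      show deriv (deriv G) x = deriv G1 x
      exact Filter.EventuallyEq.deriv_eq hd1
    rw [h2, (hG1d x hx).deriv]
    exact hG2neg x hx
  -- the root set equals the zero set of G
  have hset : {x ∈ Set.Ioo lo hi | (∏ i, (x + b i)) + ∑ k ∈ KS, A k * x ^ (2 * k) = 0}
      = {x ∈ Set.Ioo lo hi | G x = 0} := by
    ext x
    simp only [Set.mem_setOf_eq]
    refine and_congr_right fun hx => ?_
    have hx0 := hIsub x hx
    have hN := hxN x hx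
    have hSx := hSpos x (ne_of_lt hx0)
    have hSeq : ∑ k ∈ KS, A k * x ^ (2 * k) = S x := rfl
    set R : ℝ := ∏ i ∈ E, (-(x + b i)) with hR
    have hRpos : 0 < R :=
      Finset.prod_pos fun i hi' => by have := hxE x hx i hi'; linarith
    have hprod : (∏ i, (x + b i)) = -((x + b iN) * R) := by
      rw [← Finset.mul_prod_erase Finset.univ _ (Finset.mem_univ iN), ← hE]
      have h1 : ∏ i ∈ E, (x + b i) = (-1) ^ E.card * R := by
        rw [hR, ← Finset.prod_const, ← Finset.prod_mul_distrib]
        exact Finset.prod_congr rfl fun i _ => by ring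
      have hcard : E.card = n - 1 := by
        rw [hE, Finset.card_erase_of_mem (Finset.mem_univ iN), Finset.card_univ,
          Fintype.card_fin]
      have hodd : Odd (n - 1) := ⟨m - 1, by omega⟩
      rw [h1, hcard, hodd.neg_one_pow]
      ring
    have hlogsum : ∑ i ∈ E, Real.log (-(x + b i)) = Real.log R := by
      rw [hR]
      exact (Real.log_prod (s := E) (fun i hi' => by
        have := hxE x hx i hi'
        intro hcontra
        rw [neg_eq_zero] at hcontra
        linarith)).symm
    constructor
    · intro h
      have hSR : S x = (x + b iN) * R := by
        rw [hprod, hSeq] at h; linarith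
      rw [hG]
      simp only []
      rw [hlogsum, hSR, ← Real.log_mul (ne_of_gt hN) (ne_of_gt hRpos)]
      ring
    · intro h
      rw [hG] at h
      simp only [] at h
      rw [hlogsum] at h
      have h2 : Real.log ((x + b iN) * R) = Real.log (S x) := by
        rw [Real.log_mul (ne_of_gt hN) (ne_of_gt hRpos)]
        linarith
      have h3 : (x + b iN) * R = S x := by
        have e1 := Real.exp_log (mul_pos hN hRpos)
        have e2 := Real.exp_log hSx
        rw [← e1, ← e2, h2]
      rw [hprod, hSeq, ← h3]
      ring
  rw [hset]
  exact strictConcaveOn_zeros hconc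

set_option maxHeartbeats 1000000 in
theorem lemma2_even_Q_roots
    (n : ℕ) (hn : 4 ≤ n) (heven : Even n)
    (a : Fin n → ℝ) (hpos : ∀ i, 0 < a i) (hmono : Monotone a)
    (A : ℕ → ℝ) (hA : ∀ k ∈ Finset.Icc 1 (n / 2 - 1), 0 ≤ A k)
    (hA' : ∃ k ∈ Finset.Icc 1 (n / 2 - 1), A k ≠ 0)
    (Q : ℝ → ℝ)
    (hQ : ∀ x, Q x = (∏ i, (x + a i)) +
      ∑ k ∈ Finset.Icc 1 (n / 2 - 1), A k * x ^ (2 * k)) :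
    Set.encard {x ∈ Set.Ioo (-(a ⟨n - 1, by omega⟩)) (-(a ⟨n - 2, by omega⟩)) |
      Q x = 0} ≤ 2 ∧
    Set.encard {x ∈ Set.Ioo (-(a ⟨1, by omega⟩)) (-(a ⟨0, by omega⟩)) |
      Q x = 0} ≤ 2 := by
  have hn2 : 2 ≤ n / 2 := by omega
  obtain ⟨mm, hmm⟩ := heven
  have heven' : Even n := ⟨mm, hmm⟩
  constructor
  · have h := interval_top n hn heven' a hpos hmono A hA hA'
    have hset : {x ∈ Set.Ioo (-(a ⟨n - 1, by omega⟩)) (-(a ⟨n - 2, by omega⟩)) | Q x = 0}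
        = {x ∈ Set.Ioo (-(a ⟨n - 1, by omega⟩)) (-(a ⟨n - 2, by omega⟩)) |
            (∏ i, (x + a i)) + ∑ k ∈ Finset.Icc 1 (n / 2 - 1), A k * x ^ (2 * k) = 0} := by
      ext x
      simp only [Set.mem_setOf_eq, hQ]
    rw [hset]
    exact h
  · set P : ℝ := ∏ i, a i with hP
    have hPpos : 0 < P := Finset.prod_pos fun i _ => hpos i
    set b : Fin n → ℝ := fun i => (a i.rev)⁻¹ with hb
    set A' : ℕ → ℝ := fun k => A (n / 2 - k) * P⁻¹ with hA'def
    have hbpos : ∀ i, 0 < b i := fun i => inv_pos.mpr (hpos _)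
    have hbmono : Monotone b := by
      intro i j hij
      have h1 : j.rev ≤ i.rev := Fin.rev_le_rev.mpr hij
      exact inv_anti₀ (hpos _) (hmono h1)
    have hA'nn : ∀ k ∈ Finset.Icc 1 (n / 2 - 1), 0 ≤ A' k := by
      intro k hk
      rw [Finset.mem_Icc] at hk
      have hmem : n / 2 - k ∈ Finset.Icc 1 (n / 2 - 1) := Finset.mem_Icc.mpr (by omega)
      exact mul_nonneg (hA _ hmem) (le_of_lt (inv_pos.mpr hPpos))
    have hA'ne : ∃ k ∈ Finset.Icc 1 (n / 2 - 1), A' k ≠ 0 := by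
      obtain ⟨k0, hk0, h0⟩ := hA'
      rw [Finset.mem_Icc] at hk0
      refine ⟨n / 2 - k0, Finset.mem_Icc.mpr (by omega), ?_⟩
      have e : n / 2 - (n / 2 - k0) = k0 := by omega
      rw [hA'def]
      simp only []
      rw [e]
      exact mul_ne_zero h0 (inv_ne_zero (ne_of_gt hPpos))
    have h := interval_top n hn heven' b hbpos hbmono A' hA'nn hA'ne
    have hbN : b ⟨n - 1, by omega⟩ = (a ⟨0, by omega⟩)⁻¹ := by
      rw [hb]
      simp only []
      congr 2
      apply Fin.ext
      simp [Fin.rev]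
      omega
    have hbM : b ⟨n - 2, by omega⟩ = (a ⟨1, by omega⟩)⁻¹ := by
      rw [hb]
      simp only []
      congr 2
      apply Fin.ext
      simp [Fin.rev]
      omega
    rw [hbN, hbM] at h
    set s : Set ℝ := {x ∈ Set.Ioo (-(a ⟨1, by omega⟩)) (-(a ⟨0, by omega⟩)) | Q x = 0} with hs
    set t : Set ℝ := {x ∈ Set.Ioo (-(a ⟨0, by omega⟩)⁻¹) (-(a ⟨1, by omega⟩)⁻¹) |
      (∏ i, (x + b i)) + ∑ k ∈ Finset.Icc 1 (n / 2 - 1), A' k * x ^ (2 * k) = 0} with hts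
    have hmap : ∀ x ∈ s, x⁻¹ ∈ t := by
      intro x hx
      obtain ⟨hxI, hxQ⟩ := hx
      have ha0 : 0 < a ⟨0, by omega⟩ := hpos _
      have ha1 : 0 < a ⟨1, by omega⟩ := hpos _
      have hx0 : x < 0 := lt_of_lt_of_le hxI.2 (by linarith)
      have hxne : x ≠ 0 := ne_of_lt hx0
      constructor
      · constructor
        · have h1 : (-(a ⟨0, by omega⟩)) < 0 := by linarith
          have h2 := (inv_lt_inv_of_neg h1 hx0).mpr hxI.2
          rw [inv_neg] at h2
          exact h2
        · have h1 : (-(a ⟨1, by omega⟩)) < 0 := by linarith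
          have h2 := (inv_lt_inv_of_neg hx0 h1).mpr hxI.1
          rw [inv_neg] at h2
          exact h2
      · have hane : ∀ i : Fin n, a i ≠ 0 := fun i => ne_of_gt (hpos i)
        have e1 : ∏ i, (x⁻¹ + b i) = ((∏ i, (x + a i)) * (x⁻¹) ^ n) * P⁻¹ := by
          rw [hb]
          simp only []
          have step1 : (∏ i : Fin n, (x⁻¹ + (a (Fin.rev i))⁻¹)) = ∏ i : Fin n, (x⁻¹ + (a i)⁻¹) :=
            Fintype.prod_equiv Fin.revPerm _ _ (fun i => rfl)
          rw [step1]
          have step2 : ∏ i, (x⁻¹ + (a i)⁻¹) = ∏ i, ((x + a i) * x⁻¹ * (a i)⁻¹) := by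
            refine Finset.prod_congr rfl fun i _ => ?_
            field_simp [hane i]
            ring
          rw [step2, Finset.prod_mul_distrib, Finset.prod_mul_distrib,
            Finset.prod_const, Finset.card_univ, Fintype.card_fin,
            Finset.prod_inv_distrib]
        have e2 : ∑ k ∈ Finset.Icc 1 (n / 2 - 1), A' k * (x⁻¹) ^ (2 * k)
            = ((∑ k ∈ Finset.Icc 1 (n / 2 - 1), A k * x ^ (2 * k)) * (x⁻¹) ^ n) * P⁻¹ := by
          rw [Finset.sum_mul, Finset.sum_mul]
          refine Finset.sum_nbij' (fun k => n / 2 - k) (fun k => n / 2 - k) ?_ ?_ ?_ ?_ ?_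
          · intro k hk
            rw [Finset.mem_Icc] at hk
            show n / 2 - k ∈ Finset.Icc 1 (n / 2 - 1)
            rw [Finset.mem_Icc]
            omega
          · intro k hk
            rw [Finset.mem_Icc] at hk
            show n / 2 - k ∈ Finset.Icc 1 (n / 2 - 1)
            rw [Finset.mem_Icc]
            omega
          · intro k hk
            rw [Finset.mem_Icc] at hk
            show n / 2 - (n / 2 - k) = k
            omega
          · intro k hk
            rw [Finset.mem_Icc] at hk
            show n / 2 - (n / 2 - k) = k
            omega
          · intro k hk
            rw [Finset.mem_Icc] at hk
            show A' k * (x⁻¹) ^ (2 * k)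
              = A (n / 2 - k) * x ^ (2 * (n / 2 - k)) * (x⁻¹) ^ n * P⁻¹
            have h1 : 2 * (n / 2 - k) = n - 2 * k := by omega
            have h2 : (x⁻¹) ^ n = (x⁻¹) ^ (n - 2 * k) * (x⁻¹) ^ (2 * k) := by
              rw [← pow_add]
              congr 1
              omega
            rw [hA'def]
            simp only []
            calc A (n / 2 - k) * P⁻¹ * (x⁻¹) ^ (2 * k)
                = A (n / 2 - k) * P⁻¹ *
                    ((x ^ (n - 2 * k) * (x⁻¹) ^ (n - 2 * k)) * (x⁻¹) ^ (2 * k)) := by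
                  rw [← mul_pow, mul_inv_cancel₀ hxne, one_pow, one_mul]
              _ = A (n / 2 - k) * x ^ (2 * (n / 2 - k)) * (x⁻¹) ^ n * P⁻¹ := by
                  rw [h1, h2]
                  ring
        have hQx : (∏ i, (x + a i)) + ∑ k ∈ Finset.Icc 1 (n / 2 - 1), A k * x ^ (2 * k) = 0 := by
          rw [← hQ x]
          exact hxQ
        rw [e1, e2, ← add_mul, ← add_mul, hQx, zero_mul, zero_mul]
    calc s.encard = (Set.image Inv.inv s).encard :=
          (Set.InjOn.encard_image (fun x _ y _ hxy => inv_injective hxy)).symm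
      _ ≤ t.encard := Set.encard_mono (by rintro y ⟨x, hx, rfl⟩; exact hmap x hx)
      _ ≤ 2 := h
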